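/- For n ≥ 3 and v in the open unit ball of ℝⁿ, det μ_{n,v} = ((1 − ‖v‖²)/((n+1) − (n−3)‖v‖²))^{n+1}. -/

import Mathlib

open scoped Matrix

lemma det_smul_one_add (n : ℕ) (b : ℝ) (hb : b ≠ 0) (u w : Fin n → ℝ) :
    (b • (1 : Matrix (Fin n) (Fin n) ℝ) + Matrix.replicateCol Unit u * Matrix.replicateRow Unit w).det
      = b ^ n * (1 + b⁻¹ * (w ⬝ᵥ u)) := by
  have h : b • (1 : Matrix (Fin n) (Fin n) ℝ) + Matrix.replicateCol Unit u * Matrix.replicateRow Unit w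
      = b • ((1 : Matrix (Fin n) (Fin n) ℝ) + Matrix.replicateCol Unit (b⁻¹ • u) * Matrix.replicateRow Unit w) := by
    ext i j
    simp only [Matrix.add_apply, Matrix.smul_apply, Matrix.mul_apply, Matrix.replicateCol_apply,
      Matrix.replicateRow_apply, Matrix.one_apply, Pi.smul_apply, smul_eq_mul, Finset.sum_const,
      Finset.card_univ, Fintype.card_unit, one_smul, smul_ite, mul_one, mul_zero, mul_add]
    field_simp
  rw [h, Matrix.det_smul, Matrix.det_one_add_replicateCol_mul_replicateRow, dotProduct_smul]
  rw [smul_eq_mul, Fintype.card_fin]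

lemma det_blocks (n : ℕ) (a b : ℝ) (ha : a ≠ 0) (hb : b ≠ 0) (w : Fin n → ℝ) :
    (Matrix.fromBlocks (Matrix.of fun _ _ : Unit => a) (Matrix.of fun _ j => w j)
      (Matrix.of fun i _ => w i) (b • 1 + Matrix.of fun i j => w i * w j)).det
    = a * (b ^ n * (1 + b⁻¹ * ((1 - a⁻¹) * (w ⬝ᵥ w)))) := by
  haveI iA : Invertible (Matrix.of fun _ _ : Unit => a : Matrix Unit Unit ℝ) :=
    ⟨Matrix.of fun _ _ => a⁻¹,
      by ext i j; simp [Matrix.mul_apply, Matrix.one_apply, inv_mul_cancel₀ ha,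
        Subsingleton.elim i j],
      by ext i j; simp [Matrix.mul_apply, Matrix.one_apply, mul_inv_cancel₀ ha,
        Subsingleton.elim i j]⟩
  rw [Matrix.det_fromBlocks₁₁]
  have hinv : (⅟(Matrix.of fun _ _ : Unit => a : Matrix Unit Unit ℝ))
      = Matrix.of fun _ _ => a⁻¹ :=
    invOf_eq_right_inv (by
      ext i j; simp [Matrix.mul_apply, Matrix.one_apply, mul_inv_cancel₀ ha,
        Subsingleton.elim i j])
  have hS : (b • 1 + Matrix.of fun i j => w i * w j) -
      (Matrix.of fun i _ => w i : Matrix (Fin n) Unit ℝ) *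
        (⅟(Matrix.of fun _ _ : Unit => a : Matrix Unit Unit ℝ)) *
        (Matrix.of fun _ j => w j : Matrix Unit (Fin n) ℝ)
      = b • (1 : Matrix (Fin n) (Fin n) ℝ) +
        Matrix.replicateCol Unit ((1 - a⁻¹) • w) * Matrix.replicateRow Unit w := by
    rw [hinv]
    ext i j
    simp [Matrix.mul_apply, Matrix.one_apply]
    ring
  rw [hS, det_smul_one_add n b hb, Matrix.det_unique, dotProduct_smul]
  simp only [Matrix.of_apply, smul_eq_mul]

open scoped RealInnerProductSpace

noncomputable def gam {n : ℕ} (v : EuclideanSpace ℝ (Fin n)) : ℝ :=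
  1 / Real.sqrt (1 - ‖v‖ ^ 2)

noncomputable def eAdd {n : ℕ} (u v : EuclideanSpace ℝ (Fin n)) :
    EuclideanSpace ℝ (Fin n) :=
  (1 / (1 + ⟪u, v⟫)) •
    (u + (1 / gam u) • v + ((gam u / (1 + gam u)) * ⟪u, v⟫) • u)

noncomputable def mobius {n : ℕ} (v : EuclideanSpace ℝ (Fin n)) :
    Matrix (Unit ⊕ Fin n) (Unit ⊕ Fin n) ℝ :=
  (2 * (gam v) ^ 2 / (((n : ℝ) - 3) + 4 * (gam v) ^ 2)) •
    Matrix.fromBlocks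
      (Matrix.of fun _ _ => 1 - 1 / (2 * (gam v) ^ 2))
      (Matrix.of fun _ j => v j)
      (Matrix.of fun i _ => v i)
      ((1 / (2 * (gam v) ^ 2)) • 1 + Matrix.of fun i j => v i * v j)

theorem mobius_det {n : ℕ} (hn : 3 ≤ n) (v : EuclideanSpace ℝ (Fin n))
    (hv : ‖v‖ < 1) :
    (mobius v).det =
      ((1 - ‖v‖ ^ 2) / (((n : ℝ) + 1) - ((n : ℝ) - 3) * ‖v‖ ^ 2)) ^ (n + 1) := by
  have hs0 : (0:ℝ) ≤ ‖v‖ ^ 2 := sq_nonneg _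
  have hs1 : (0:ℝ) < 1 - ‖v‖ ^ 2 := by nlinarith [norm_nonneg v]
  set s : ℝ := ‖v‖ ^ 2 with hsdef
  have hγ : (gam v) ^ 2 = 1 / (1 - s) := by
    rw [gam, div_pow, one_pow, Real.sq_sqrt hs1.le]
  have hb : (1 : ℝ) / (2 * (gam v) ^ 2) = (1 - s) / 2 := by
    rw [hγ]; field_simp
  have ha : (1 : ℝ) - 1 / (2 * (gam v) ^ 2) = (1 + s) / 2 := by
    rw [hb]; ring
  have hn3 : (3:ℝ) ≤ (n:ℝ) := by exact_mod_cast hn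
  have hd : (0:ℝ) < ((n : ℝ) + 1) - ((n : ℝ) - 3) * s := by nlinarith
  have hc : 2 * (gam v) ^ 2 / (((n : ℝ) - 3) + 4 * (gam v) ^ 2)
      = 2 / (((n : ℝ) + 1) - ((n : ℝ) - 3) * s) := by
    rw [hγ]
    rw [div_eq_div_iff (by
      have h4 : (0:ℝ) < 4 * (1/(1-s)) := by positivity
      nlinarith) hd.ne']
    field_simp
    ring
  have hvv : (fun i => v i) ⬝ᵥ (fun i => v i) = s := by
    rw [hsdef, ← real_inner_self_eq_norm_sq]
    simp only [dotProduct, PiLp.inner_apply, RCLike.inner_apply, conj_trivial]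
  have hane : ((1:ℝ) + s) / 2 ≠ 0 := by positivity
  have hbne : ((1:ℝ) - s) / 2 ≠ 0 := by positivity
  rw [mobius, Matrix.det_smul, hc, hb]
  simp only [show ((1:ℝ) - (1-s)/2) = (1+s)/2 from by ring]
  rw [det_blocks n _ _ hane hbne, hvv]
  have hcard : Fintype.card (Unit ⊕ Fin n) = n + 1 := by simp [Fintype.card_sum, Nat.add_comm]
  rw [hcard]
  have key : ((1 + s) / 2) * (((1 - s) / 2) ^ n *
      (1 + ((1 - s) / 2)⁻¹ * ((1 - (((1 + s) / 2))⁻¹) * s)))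
      = ((1 - s) / 2) ^ (n + 1) := by
    have h1 : (0:ℝ) < 1 + s := by linarith
    rw [pow_succ]
    have : (1 + ((1 - s) / 2)⁻¹ * ((1 - (((1 + s) / 2))⁻¹) * s))
        = ((1 - s) / (1 + s)) := by
      field_simp
      ring
    rw [this]
    field_simp
  rw [key, ← mul_pow]
  congr 1
  field_simp
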